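/- Let G = ⟨L | R⟩ be a positive homogeneously presented group and G⁺ the associated monoid. If G⁺ is cancellative and carries a fundamental element, then the localization homomorphism π: G⁺ → G is injective. -/

import Mathlib

/-- The canonical monoid homomorphism from the free monoid to the free group. -/
def toFreeGroupHom {L : Type*} : FreeMonoid L →* FreeGroup L :=
  FreeMonoid.lift FreeGroup.of

/-- The relators in the free group associated to a positive presentation. -/
def relatorsOfRel {L : Type*} (R : FreeMonoid L → FreeMonoid L → Prop) :
    Set (FreeGroup L) :=
  {g | ∃ a b : FreeMonoid L, R a b ∧ g = toFreeGroupHom a * (toFreeGroupHom b)⁻¹}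

/-- Let G = ⟨L ∣ R⟩ be a positive homogeneously presented group and G⁺ the associated
monoid.  If G⁺ is cancellative and carries a fundamental element, then the localization
homomorphism π : G⁺ → G is injective: two positive words mapping to the same element of
the presented group are already equivalent in the monoid. -/
theorem stmt_12 {L : Type*} (R : FreeMonoid L → FreeMonoid L → Prop)
    (hhom : ∀ a b : FreeMonoid L, R a b → a.length = b.length)
    (hcan : ∀ a b x y : (conGen R).Quotient, a * x * b = a * y * b → x = y)
    (Δ : (conGen R).Quotient) (σ : Equiv.Perm L)
    (hΔ : ∀ l : L, ∃ d : (conGen R).Quotient,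
      Δ = (conGen R).mk' (FreeMonoid.of l) * d ∧
      Δ = d * (conGen R).mk' (FreeMonoid.of (σ l)))
    (a b : FreeMonoid L)
    (hab : QuotientGroup.mk' (Subgroup.normalClosure (relatorsOfRel R)) (toFreeGroupHom a)
        = QuotientGroup.mk' (Subgroup.normalClosure (relatorsOfRel R)) (toFreeGroupHom b)) :
    (conGen R) a b := by
  classical
  let mk : FreeMonoid L →* (conGen R).Quotient := (conGen R).mk'
  -- cancellation
  have hrc : ∀ x y z : (conGen R).Quotient, x * z = y * z → x = y := fun x y z h =>
    hcan 1 z x y (by simpa using h)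
  have hlc : ∀ z x y : (conGen R).Quotient, z * x = z * y → x = y := fun z x y h =>
    hcan z 1 x y (by simpa using h)
  -- the key commutation relation: w * Δ = Δ * σ(w)
  have key : ∀ w : FreeMonoid L, mk w * Δ = Δ * mk (FreeMonoid.map σ w) := by
    intro w
    induction w using FreeMonoid.inductionOn' with
    | one => simp [mk]
    | of_mul l t ih =>
      obtain ⟨d, hd1, hd2⟩ := hΔ l
      have h1 : mk (FreeMonoid.of l) * Δ = Δ * mk (FreeMonoid.of (σ l)) := by
        conv_lhs => rw [hd2]
        rw [← mul_assoc, ← hd1]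
      rw [map_mul, mul_assoc, ih, ← mul_assoc, h1, map_mul, FreeMonoid.map_of, mul_assoc, ← map_mul]
  have hσσ : ∀ w : FreeMonoid L, FreeMonoid.map σ (FreeMonoid.map σ.symm w) = w := by
    intro w
    induction w using FreeMonoid.inductionOn' with
    | one => simp
    | of_mul l t ih => simp [ih]
  -- pushing elements across Δ from right to left
  have pushL1 : ∀ x : (conGen R).Quotient, ∃ y, Δ * x = y * Δ := by
    intro x
    obtain ⟨w, rfl⟩ := Con.mk'_surjective x
    exact ⟨mk (FreeMonoid.map σ.symm w), by rw [key (FreeMonoid.map σ.symm w), hσσ]⟩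
  have pushLn : ∀ (n : ℕ) (x : (conGen R).Quotient), ∃ y, Δ ^ n * x = y * Δ ^ n := by
    intro n
    induction n with
    | zero => exact fun x => ⟨x, by simp⟩
    | succ n ih =>
      intro x
      obtain ⟨y1, hy1⟩ := pushL1 x
      obtain ⟨y2, hy2⟩ := ih y1
      exact ⟨y2, by rw [pow_succ, mul_assoc, hy1, ← mul_assoc, hy2, mul_assoc, ← pow_succ]⟩
  -- every element right-divides a power of Δ
  have rdivL : ∀ ls : List L, ∃ e, Δ ^ ls.length = e * mk (FreeMonoid.ofList ls) := by
    intro ls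
    induction ls using List.reverseRecOn with
    | nil => exact ⟨1, by simp [mk]⟩
    | append_singleton ls s ih =>
      obtain ⟨e, he⟩ := ih
      obtain ⟨d, hd1, hd2⟩ := hΔ (σ.symm s)
      rw [Equiv.apply_symm_apply] at hd2
      obtain ⟨y, hy⟩ := pushLn ls.length d
      refine ⟨y * e, ?_⟩
      have hof : FreeMonoid.ofList (ls ++ [s]) =
          FreeMonoid.ofList ls * FreeMonoid.of s := rfl
      have h3 : Δ ^ ls.length * Δ =
          Δ ^ ls.length * (d * (conGen R).mk' (FreeMonoid.of s)) := by rw [← hd2]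
      rw [List.length_append, List.length_singleton, pow_succ, h3, ← mul_assoc, hy, he, hof,
        map_mul]
      simp only [mul_assoc]
      rfl
  have rdivM : ∀ x : (conGen R).Quotient, ∃ (n : ℕ) (e : (conGen R).Quotient),
      Δ ^ n = e * x := by
    intro x
    obtain ⟨w, rfl⟩ := Con.mk'_surjective x
    exact ⟨w.toList.length, rdivL w.toList⟩
  -- the Ore condition
  have orecond : ∀ (r : (conGen R).Quotient) (s : (⊤ : Submonoid (conGen R).Quotient)),
      ∃ (r' : (conGen R).Quotient) (s' : (⊤ : Submonoid (conGen R).Quotient)),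
        (s' : (conGen R).Quotient) * r = r' * (s : (conGen R).Quotient) := by
    intro r s
    obtain ⟨nr, er, hr⟩ := rdivM r
    obtain ⟨ns, es, hs⟩ := rdivM (s : (conGen R).Quotient)
    refine ⟨Δ ^ nr * es, ⟨Δ ^ ns * er, trivial⟩, ?_⟩
    rw [mul_assoc, ← hr, mul_assoc, ← hs, ← pow_add, ← pow_add, add_comm]
  haveI oreset : OreLocalization.OreSet (⊤ : Submonoid (conGen R).Quotient) :=
    { ore_right_cancel := fun r₁ r₂ s h => ⟨1, by
        simp only [OneMemClass.coe_one, one_mul]; exact hrc r₁ r₂ s h⟩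
      oreNum := fun r s => (orecond r s).choose
      oreDenom := fun r s => (orecond r s).choose_spec.choose
      ore_eq := fun r s => (orecond r s).choose_spec.choose_spec }
  -- the Ore localization and the injectivity of the numerator map
  let ν : (conGen R).Quotient →*
      OreLocalization (⊤ : Submonoid (conGen R).Quotient) (conGen R).Quotient :=
    OreLocalization.numeratorHom
  have hinj : Function.Injective ν := by
    intro x y h
    rw [show ν x = x /ₒ 1 from rfl, show ν y = y /ₒ 1 from rfl,
      OreLocalization.oreDiv_eq_iff] at h
    obtain ⟨u, v, h1, h2⟩ := h
    simp only [OneMemClass.coe_one, mul_one] at h2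
    rw [Submonoid.smul_def, smul_eq_mul, smul_eq_mul, ← h2] at h1
    exact (hlc _ _ _ h1).symm
  -- the homomorphism from the free group to the units of the localization
  let f : L → (OreLocalization (⊤ : Submonoid (conGen R).Quotient) (conGen R).Quotient)ˣ :=
    fun l => OreLocalization.numeratorUnit ⟨mk (FreeMonoid.of l), trivial⟩
  let φ := FreeGroup.lift f
  have hφword : ∀ w : FreeMonoid L, ((φ (toFreeGroupHom w) : _) : _) = ν (mk w) := by
    have heq : (Units.coeHom _).comp (φ.comp toFreeGroupHom) = ν.comp mk :=
      FreeMonoid.hom_eq fun l => by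
        simp only [MonoidHom.comp_apply, Units.coeHom_apply]
        rw [show toFreeGroupHom (FreeMonoid.of l) = FreeGroup.of l from rfl,
          FreeGroup.lift_apply_of]
        rfl
    exact fun w => DFunLike.congr_fun heq w
  have hker : Subgroup.normalClosure (relatorsOfRel R) ≤ φ.ker := by
    apply Subgroup.normalClosure_le_normal
    rintro g ⟨a', b', hR, rfl⟩
    have hmkeq : mk a' = mk b' := (Con.eq (conGen R)).mpr (ConGen.Rel.of _ _ hR)
    have h2 : φ (toFreeGroupHom a') = φ (toFreeGroupHom b') := by
      apply Units.ext
      rw [hφword a', hφword b', hmkeq]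
    simp [MonoidHom.mem_ker, map_mul, map_inv, h2]
  -- conclude
  have hmem : (toFreeGroupHom a)⁻¹ * toFreeGroupHom b ∈
      Subgroup.normalClosure (relatorsOfRel R) := by
    rw [QuotientGroup.mk'_apply, QuotientGroup.mk'_apply, QuotientGroup.eq] at hab
    exact hab
  have hφab : φ (toFreeGroupHom a) = φ (toFreeGroupHom b) := by
    have h1 : φ ((toFreeGroupHom a)⁻¹ * toFreeGroupHom b) = 1 := hker hmem
    rw [map_mul, map_inv] at h1
    exact (inv_mul_eq_one.mp h1)
  have hfin : ν (mk a) = ν (mk b) := by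
    rw [← hφword a, ← hφword b, hφab]
  exact (Con.eq (conGen R)).mp (hinj hfin)
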